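/- For every locally integrable function f on ℝⁿ, every α > 0, and every x ∈ ℝⁿ, the Hardy–Littlewood maximal function of the indicator of the level set {Mf > α} satisfies M(χ_{{Mf>α}})(x) ≤ (9^n / α) · Mf(x). -/

import Mathlib

open MeasureTheory Metric Set
open scoped ENNReal

/-- The uncentered Hardy–Littlewood maximal operator over cubes (= closed balls in the
sup metric on `ℝⁿ = Fin n → ℝ`), acting on `ℝ≥0∞`-valued functions. -/
noncomputable def maximal {n : ℕ} (f : (Fin n → ℝ) → ℝ≥0∞) (x : Fin n → ℝ) : ℝ≥0∞ :=
  ⨆ (c : Fin n → ℝ) (r : ℝ) (_ : 0 < r) (_ : x ∈ closedBall c r),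
    (volume (closedBall c r))⁻¹ * ∫⁻ y in closedBall c r, f y

/-- `Mχ_E`, the maximal function of the indicator of a set `E`. -/
noncomputable def maximalInd {n : ℕ} (E : Set (Fin n → ℝ)) (x : Fin n → ℝ) : ℝ≥0∞ :=
  maximal (E.indicator 1) x

open Filter Topology

namespace StmtAux

variable {n : ℕ}

lemma le_maximal (F : (Fin n → ℝ) → ℝ≥0∞) (x c : Fin n → ℝ) {r : ℝ} (hr : 0 < r)
    (hx : x ∈ closedBall c r) :
    (volume (closedBall c r))⁻¹ * ∫⁻ y in closedBall c r, F y ≤ maximal F x := by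
  unfold maximal
  exact le_iSup_of_le c (le_iSup_of_le r (le_iSup_of_le hr (le_iSup_of_le hx le_rfl)))

lemma vol_scale (c : Fin n → ℝ) {k r : ℝ} (hk : 0 ≤ k) (hr : 0 ≤ r) :
    volume (closedBall c (k * r)) = ENNReal.ofReal (k ^ n) * volume (closedBall c r) := by
  rw [Real.volume_pi_closedBall _ (mul_nonneg hk hr), Real.volume_pi_closedBall _ hr,
    Fintype.card_fin, ← ENNReal.ofReal_mul (by positivity), ← mul_pow]
  ring_nf

/-- Integral bound via the maximal function at `x`. -/
lemma lintegral_le_vol_mul (F : (Fin n → ℝ) → ℝ≥0∞) (x c : Fin n → ℝ) {r : ℝ} (hr : 0 < r)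
    (hx : x ∈ closedBall c r) :
    ∫⁻ y in closedBall c r, F y ≤ volume (closedBall c r) * maximal F x := by
  have h0 : volume (closedBall c r) ≠ 0 := (measure_closedBall_pos volume c hr).ne'
  have ht : volume (closedBall c r) ≠ ⊤ := measure_closedBall_lt_top.ne
  have hle := mul_le_mul_right (le_maximal F x c hr hx) (volume (closedBall c r))
  rwa [← mul_assoc, ENNReal.mul_inv_cancel h0 ht, one_mul] at hle

/-- Core estimate for a single cube. -/
lemma core (F : (Fin n → ℝ) → ℝ≥0∞) {α : ℝ≥0∞} (hα : 0 < α) (hαtop : α ≠ ⊤)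
    (x c : Fin n → ℝ) {r : ℝ} (hr : 0 < r) (hx : x ∈ closedBall c r)
    {τ : ℝ} (hτ : 3 < τ) :
    (volume (closedBall c r))⁻¹ *
      ∫⁻ y in closedBall c r, ({y | α < maximal F y}.indicator 1) y ≤
      ENNReal.ofReal (τ ^ n) * ((3 : ℝ≥0∞) ^ n * α⁻¹ * maximal F x) := by
  set E : Set (Fin n → ℝ) := {y | α < maximal F y} with hE
  set Q := closedBall c r with hQ
  have hQ0 : volume Q ≠ 0 := (measure_closedBall_pos volume c hr).ne'
  have hQt : volume Q ≠ ⊤ := measure_closedBall_lt_top.ne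
  by_cases hA : ∃ c' : Fin n → ℝ, ∃ r' : ℝ, 0 < r' ∧ r ≤ r' ∧
      (closedBall c' r' ∩ Q).Nonempty ∧
      α * volume (closedBall c' r') < ∫⁻ z in closedBall c' r', F z
  · -- Case A: a large cube with big average meets Q; then `maximal F x` is big.
    obtain ⟨c', r', hr', hrr', ⟨y, hy1, hy2⟩, hint⟩ := hA
    have hB0 : volume (closedBall c' r') ≠ 0 := (measure_closedBall_pos volume c' hr').ne'
    have hBt : volume (closedBall c' r') ≠ ⊤ := measure_closedBall_lt_top.ne
    have hsub : Q ⊆ closedBall c' (3 * r') := by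
      intro z hz
      have h1 : dist z c ≤ r := hz
      have h2 : dist y c' ≤ r' := hy1
      have h3 : dist y c ≤ r := hy2
      have h4 : dist z c' ≤ dist z c + dist c y + dist y c' := dist_triangle4 z c y c'
      have h5 : dist c y = dist y c := dist_comm c y
      simp only [mem_closedBall]
      linarith
    have hx3 : x ∈ closedBall c' (3 * r') := hsub hx
    have hαle : α ≤ (3 : ℝ≥0∞) ^ n * maximal F x := by
      have hmono : ∫⁻ z in closedBall c' r', F z ≤ ∫⁻ z in closedBall c' (3 * r'), F z :=
        lintegral_mono' (Measure.restrict_mono (closedBall_subset_closedBall (by linarith)) le_rfl)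
          le_rfl
      have h3vol : volume (closedBall c' (3 * r')) =
          (3 : ℝ≥0∞) ^ n * volume (closedBall c' r') := by
        rw [vol_scale c' (by norm_num) hr'.le, ENNReal.ofReal_pow (by norm_num),
          ENNReal.ofReal_ofNat]
      have hchain : α * volume (closedBall c' r') ≤
          ((3 : ℝ≥0∞) ^ n * maximal F x) * volume (closedBall c' r') := by
        calc α * volume (closedBall c' r') ≤ ∫⁻ z in closedBall c' r', F z := hint.le
          _ ≤ ∫⁻ z in closedBall c' (3 * r'), F z := hmono
          _ ≤ volume (closedBall c' (3 * r')) * maximal F x :=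
              lintegral_le_vol_mul F x c' (by linarith) hx3
          _ = ((3 : ℝ≥0∞) ^ n * maximal F x) * volume (closedBall c' r') := by
              rw [h3vol]; ring
      exact (ENNReal.mul_le_mul_iff_left hB0 hBt).1 hchain
    have hLHS : (volume Q)⁻¹ * ∫⁻ y in Q, (E.indicator 1) y ≤ 1 := by
      have : ∫⁻ y in Q, (E.indicator 1) y ≤ ∫⁻ _ in Q, (1 : ℝ≥0∞) := by
        refine lintegral_mono fun y => ?_
        exact Set.indicator_le_self E 1 y
      calc (volume Q)⁻¹ * ∫⁻ y in Q, (E.indicator 1) y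
          ≤ (volume Q)⁻¹ * ∫⁻ _ in Q, (1 : ℝ≥0∞) := mul_le_mul_right this _
        _ = (volume Q)⁻¹ * volume Q := by rw [setLIntegral_one]
        _ = 1 := ENNReal.inv_mul_cancel hQ0 hQt
    refine hLHS.trans ?_
    have h1 : (1 : ℝ≥0∞) ≤ ENNReal.ofReal (τ ^ n) := by
      rw [ENNReal.one_le_ofReal]
      exact one_le_pow₀ (by linarith)
    have h2 : (1 : ℝ≥0∞) ≤ (3 : ℝ≥0∞) ^ n * α⁻¹ * maximal F x := by
      have := mul_le_mul_right hαle α⁻¹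
      rwa [ENNReal.inv_mul_cancel hα.ne' hαtop, ← mul_assoc, mul_comm α⁻¹] at this
    calc (1 : ℝ≥0∞) = 1 * 1 := (one_mul 1).symm
      _ ≤ ENNReal.ofReal (τ ^ n) * ((3 : ℝ≥0∞) ^ n * α⁻¹ * maximal F x) := mul_le_mul' h1 h2
  · -- Case B: all witnessing cubes are small; use Vitali.
    push_neg at hA
    have hwit : ∀ y ∈ E ∩ Q, ∃ c' : Fin n → ℝ, ∃ r' : ℝ, 0 < r' ∧ r' ≤ r ∧
        y ∈ closedBall c' r' ∧
        α * volume (closedBall c' r') < ∫⁻ z in closedBall c' r', F z := by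
      rintro y ⟨hyE, hyQ⟩
      have hyE' : α < maximal F y := hyE
      rw [maximal] at hyE'
      obtain ⟨c', hc'⟩ := lt_iSup_iff.1 hyE'
      obtain ⟨r', hr'⟩ := lt_iSup_iff.1 hc'
      obtain ⟨hr'pos, h⟩ := lt_iSup_iff.1 hr'
      obtain ⟨hymem, h⟩ := lt_iSup_iff.1 h
      have hB0 : volume (closedBall c' r') ≠ 0 := (measure_closedBall_pos volume c' hr'pos).ne'
      have hBt : volume (closedBall c' r') ≠ ⊤ := measure_closedBall_lt_top.ne
      have hlt : α * volume (closedBall c' r') < ∫⁻ z in closedBall c' r', F z := by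
        rw [← ENNReal.div_eq_inv_mul] at h
        exact (ENNReal.lt_div_iff_mul_lt (Or.inl hB0) (Or.inl hBt)).1 h
      refine ⟨c', r', hr'pos, ?_, hymem, hlt⟩
      by_contra hcon
      push_neg at hcon
      exact absurd (hA c' r' hr'pos hcon.le ⟨y, hymem, hyQ⟩) (not_le.2 hlt)
    choose! cB rB h1 h2 h3 h4 using hwit
    obtain ⟨u, hut, hdisj, hcov⟩ :=
      Vitali.exists_disjoint_subfamily_covering_enlargement_closedBall (E ∩ Q) cB rB r
        (fun a ha => h2 a ha) τ hτ
    have hcnt : u.Countable := by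
      have hkey := MeasureTheory.Measure.countable_meas_pos_of_disjoint_iUnion₀
        (μ := (volume : Measure (Fin n → ℝ))) (ι := ↥u)
        (As := fun b => closedBall (cB b) (rB b))
        (fun b => measurableSet_closedBall.nullMeasurableSet)
        (fun i j hij => (hdisj i.2 j.2 (Subtype.coe_injective.ne hij)).aedisjoint)
      have huniv : {i : ↥u | 0 < volume (closedBall (cB i) (rB i))} = univ := by
        refine eq_univ_of_forall fun b => ?_
        exact measure_closedBall_pos volume _ (h1 b (hut b.2))
      rw [huniv, Set.countable_univ_iff] at hkey
      exact Set.countable_coe_iff.1 hkey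
    have hcnt' : Countable ↥u := hcnt.to_subtype
    set U := ⋃ b ∈ u, closedBall (cB b) (τ * rB b) with hU
    have hEQU : E ∩ Q ⊆ U := by
      intro y hy
      obtain ⟨b, hb, hsub⟩ := hcov y hy
      exact mem_biUnion hb (hsub (h3 y hy))
    have hUmeas : MeasurableSet U :=
      MeasurableSet.biUnion hcnt fun _ _ => measurableSet_closedBall
    have hint1 : ∫⁻ y in Q, (E.indicator 1) y ≤ volume U := by
      calc ∫⁻ y in Q, (E.indicator 1) y ≤ ∫⁻ y in Q, (U.indicator 1) y := by
            refine lintegral_mono_ae ?_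
            filter_upwards [ae_restrict_mem measurableSet_closedBall] with y hy
            by_cases hyE : y ∈ E
            · have hyU : y ∈ U := hEQU ⟨hyE, hy⟩
              simp [Set.indicator_of_mem, hyE, hyU]
            · simp [Set.indicator_of_notMem hyE]
        _ ≤ ∫⁻ y, (U.indicator 1) y := setLIntegral_le_lintegral _ _
        _ = volume U := by rw [lintegral_indicator hUmeas]; simp
    have hUvol : volume U ≤ ∑' b : ↥u, volume (closedBall (cB b) (τ * rB b)) :=
      measure_biUnion_le volume hcnt _
    have hball : ∀ b ∈ u, volume (closedBall (cB b) (τ * rB b)) ≤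
        ENNReal.ofReal (τ ^ n) * (α⁻¹ * ∫⁻ z in closedBall (cB b) (rB b), F z) := by
      intro b hb
      rw [vol_scale _ (by linarith) (h1 b (hut hb)).le]
      refine mul_le_mul_right ?_ _
      have hle := (h4 b (hut hb)).le
      have := mul_le_mul_right hle α⁻¹
      rwa [← mul_assoc, ENNReal.inv_mul_cancel hα.ne' hαtop, one_mul] at this
    have hsum : ∑' b : ↥u, volume (closedBall (cB b) (τ * rB b)) ≤
        ENNReal.ofReal (τ ^ n) *
          (α⁻¹ * ∫⁻ z in ⋃ b : ↥u, closedBall (cB b) (rB b), F z) := by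
      calc ∑' b : ↥u, volume (closedBall (cB b) (τ * rB b))
          ≤ ∑' b : ↥u, ENNReal.ofReal (τ ^ n) *
              (α⁻¹ * ∫⁻ z in closedBall (cB b) (rB b), F z) :=
            ENNReal.tsum_le_tsum fun b => hball b b.2
        _ = ENNReal.ofReal (τ ^ n) *
              (α⁻¹ * ∑' b : ↥u, ∫⁻ z in closedBall (cB b) (rB b), F z) := by
            rw [ENNReal.tsum_mul_left, ENNReal.tsum_mul_left]
        _ = ENNReal.ofReal (τ ^ n) *
              (α⁻¹ * ∫⁻ z in ⋃ b : ↥u, closedBall (cB b) (rB b), F z) := by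
            rw [lintegral_iUnion₀ (fun b => measurableSet_closedBall.nullMeasurableSet)
              (fun i j hij => (hdisj i.2 j.2 (Subtype.coe_injective.ne hij)).aedisjoint)]
    have hsub3 : (⋃ b : ↥u, closedBall (cB b) (rB b)) ⊆ closedBall c (3 * r) := by
      intro z hz
      obtain ⟨b, hzb⟩ := mem_iUnion.1 hz
      have hbEQ : (b : Fin n → ℝ) ∈ E ∩ Q := hut b.2
      have hd1 : dist z (cB b) ≤ rB b := hzb
      have hd2 : dist (b : Fin n → ℝ) (cB b) ≤ rB b := h3 _ hbEQ
      have hd3 : dist (b : Fin n → ℝ) c ≤ r := hbEQ.2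
      have hd4 : dist z c ≤ dist z (cB b) + dist (cB b) (b : Fin n → ℝ) + dist (b : Fin n → ℝ) c :=
        dist_triangle4 z (cB b) b c
      have hd5 : dist (cB b) (b : Fin n → ℝ) = dist (b : Fin n → ℝ) (cB b) := dist_comm _ _
      have hrb : rB b ≤ r := h2 _ hbEQ
      simp only [mem_closedBall]
      linarith
    have hint3 : ∫⁻ z in ⋃ b : ↥u, closedBall (cB b) (rB b), F z ≤
        ∫⁻ z in closedBall c (3 * r), F z :=
      lintegral_mono' (Measure.restrict_mono hsub3 le_rfl) le_rfl
    have h3Q : ∫⁻ z in closedBall c (3 * r), F z ≤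
        volume (closedBall c (3 * r)) * maximal F x :=
      lintegral_le_vol_mul F x c (by linarith)
        (closedBall_subset_closedBall (by linarith) hx)
    have h3vol : volume (closedBall c (3 * r)) = (3 : ℝ≥0∞) ^ n * volume Q := by
      rw [vol_scale c (by norm_num) hr.le, ENNReal.ofReal_pow (by norm_num),
        ENNReal.ofReal_ofNat]
    calc (volume Q)⁻¹ * ∫⁻ y in Q, (E.indicator 1) y
        ≤ (volume Q)⁻¹ * (ENNReal.ofReal (τ ^ n) *
            (α⁻¹ * (((3 : ℝ≥0∞) ^ n * volume Q) * maximal F x))) := by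
          refine mul_le_mul_right ?_ _
          refine hint1.trans (hUvol.trans (hsum.trans ?_))
          refine mul_le_mul_right (mul_le_mul_right ?_ _) _
          rw [← h3vol]
          exact hint3.trans h3Q
      _ = ((volume Q)⁻¹ * volume Q) *
            (ENNReal.ofReal (τ ^ n) * ((3 : ℝ≥0∞) ^ n * α⁻¹ * maximal F x)) := by ring
      _ = ENNReal.ofReal (τ ^ n) * ((3 : ℝ≥0∞) ^ n * α⁻¹ * maximal F x) := by
          rw [ENNReal.inv_mul_cancel hQ0 hQt, one_mul]

end StmtAux

/-- For every locally integrable `f`, `α > 0` and `x`,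
`M(χ_{{Mf > α}})(x) ≤ (9^n / α) · Mf(x)`. -/
theorem stmt0 {n : ℕ} (f : (Fin n → ℝ) → ℝ) (hf : LocallyIntegrable f volume)
    (α : ℝ≥0∞) (hα : 0 < α) (x : Fin n → ℝ) :
    maximalInd {y | α < maximal (fun y => (‖f y‖₊ : ℝ≥0∞)) y} x ≤
      (9 ^ n / α) * maximal (fun y => (‖f y‖₊ : ℝ≥0∞)) x := by
  set F : (Fin n → ℝ) → ℝ≥0∞ := fun y => (‖f y‖₊ : ℝ≥0∞) with hF
  by_cases hαtop : α = ⊤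
  · subst hαtop
    have hE : {y | (⊤ : ℝ≥0∞) < maximal F y} = ∅ :=
      eq_empty_of_forall_notMem fun y hy => not_top_lt (show (⊤ : ℝ≥0∞) < maximal F y from hy)
    rw [maximalInd, hE]
    simp [maximal]
  · have key : ∀ τ : ℝ, 3 < τ →
        maximalInd {y | α < maximal F y} x ≤
          ENNReal.ofReal (τ ^ n) * ((3 : ℝ≥0∞) ^ n * α⁻¹ * maximal F x) := by
      intro τ hτ
      rw [maximalInd, maximal]
      refine iSup_le fun c => iSup_le fun r => iSup_le fun hr => iSup_le fun hx' => ?_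
      exact StmtAux.core F hα hαtop x c hr hx' hτ
    have htend : Tendsto (fun k : ℕ =>
        ENNReal.ofReal ((3 + 1 / (k + 1 : ℝ)) ^ n) * ((3 : ℝ≥0∞) ^ n * α⁻¹ * maximal F x))
        atTop (𝓝 (ENNReal.ofReal ((3 : ℝ) ^ n) * ((3 : ℝ≥0∞) ^ n * α⁻¹ * maximal F x))) := by
      refine ENNReal.Tendsto.mul_const ?_ (Or.inl ?_)
      · apply ENNReal.tendsto_ofReal
        have h0 : Tendsto (fun k : ℕ => (3 : ℝ) + 1 / (k + 1)) atTop (𝓝 3) := by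
          have := tendsto_one_div_add_atTop_nhds_zero_nat (𝕜 := ℝ)
          simpa using tendsto_const_nhds.add this
        exact h0.pow n
      · simp only [ne_eq, ENNReal.ofReal_eq_zero, not_le]
        positivity
    have hle : maximalInd {y | α < maximal F y} x ≤
        ENNReal.ofReal ((3 : ℝ) ^ n) * ((3 : ℝ≥0∞) ^ n * α⁻¹ * maximal F x) := by
      refine ge_of_tendsto htend (Eventually.of_forall fun k => ?_)
      refine key _ ?_
      have : (0 : ℝ) < 1 / (k + 1) := by positivity
      linarith
    refine hle.trans_eq ?_
    rw [ENNReal.ofReal_pow (by norm_num), ENNReal.ofReal_ofNat, div_eq_mul_inv]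
    have h9 : (9 : ℝ≥0∞) = 3 * 3 := by norm_num
    rw [h9, mul_pow]
    ring
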